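/- Let A ∈ Mat_N(ℤ) have a single positive integer eigenvalue λ > 1 and be non-diagonalizable, with largest Jordan block size ℓ+1. Let π = φ_{(A-λI)^ℓ} be the monomial map of (A-λI)^ℓ. Then for all P ∈ 𝔾_m^N(ℚ̄), ĥ_A⁺(P) = h(π(P))/(ℓ!·λ^ℓ), where ĥ_A⁺(P) = limsup_{n→∞} h(φ_A^n(P))/(n^ℓ λ^n). -/

import Mathlib

open Filter NumberField IsDedekindDomain
open scoped Classical

noncomputable section

/-- The logarithm of the normalized absolute value of `a` at the finite place `v` of the
number field `K`:  `log ‖a‖_v = -(additive valuation of a) * log (norm of v)`. -/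
def finVal (K : Type*) [Field K] [NumberField K]
    (v : HeightOneSpectrum (𝓞 K)) (a : K) : ℝ :=
  if h : a = 0 then 0
  else (Multiplicative.toAdd (WithZero.unzero ((v.valuation K).ne_zero_iff.mpr h)) : ℤ) *
    Real.log (Ideal.absNorm v.asIdeal)

/-- The absolute logarithmic Weil height of a tuple of elements of a number field `K`:
`h(P) = Σ_{v ∈ M_K} max {0, log ‖x₁‖_v, …, log ‖x_N‖_v}` with suitably normalized
absolute values. -/
def logHeight (K : Type*) [Field K] [NumberField K] {N : ℕ} (x : Fin N → K) : ℝ :=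
  (Module.finrank ℚ K : ℝ)⁻¹ *
    ((∑ w : InfinitePlace K, (w.mult : ℝ) * ⨆ i, max 0 (Real.log (w (x i)))) +
     ∑ᶠ v : HeightOneSpectrum (𝓞 K), ⨆ i, max 0 (finVal K v (x i)))

/-- The height of a point of `𝔾_m^N(K)`. -/
def uHeight (K : Type*) [Field K] [NumberField K] {N : ℕ} (x : Fin N → Kˣ) : ℝ :=
  logHeight K (fun i => (x i : K))

/-- The monomial map associated to an integer matrix `A`:
`φ_A(x₁,…,x_N) = (∏ x_j^{a_{1j}}, …, ∏ x_j^{a_{Nj}})`. -/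
def phi {G : Type*} [CommGroup G] {N : ℕ} (A : Matrix (Fin N) (Fin N) ℤ)
    (x : Fin N → G) : Fin N → G :=
  fun i => ∏ j, (x j) ^ (A i j)

/-! ### Auxiliary lemmas -/

section Aux

open Finset

/-! #### Monomial maps -/

lemma zpow_sum' {G : Type*} [CommGroup G] {ι : Type*} (s : Finset ι) (x : G) (f : ι → ℤ) :
    ∏ j ∈ s, x ^ (f j) = x ^ (∑ j ∈ s, f j) := by
  induction s using Finset.cons_induction with
  | empty => simp
  | cons a s ha ih => rw [Finset.prod_cons, Finset.sum_cons, ih, zpow_add]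

lemma phi_one' {G : Type*} [CommGroup G] {N : ℕ} (x : Fin N → G) : phi 1 x = x := by
  funext i
  simp [phi, Matrix.one_apply, apply_ite (fun n : ℤ => (x _) ^ n)]

lemma phi_mul' {G : Type*} [CommGroup G] {N : ℕ} (A B : Matrix (Fin N) (Fin N) ℤ)
    (x : Fin N → G) : phi A (phi B x) = phi (A * B) x := by
  funext i
  simp only [phi, Matrix.mul_apply]
  simp_rw [← Finset.prod_zpow, ← zpow_mul]
  rw [Finset.prod_comm]
  congr 1
  funext k
  rw [zpow_sum']
  congr 1
  exact Finset.sum_congr rfl fun j _ => by ring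

lemma phi_iterate {G : Type*} [CommGroup G] {N : ℕ} (A : Matrix (Fin N) (Fin N) ℤ)
    (x : Fin N → G) (n : ℕ) : (phi A)^[n] x = phi (A ^ n) x := by
  induction n with
  | zero => simp [phi_one']
  | succ n ih => rw [Function.iterate_succ_apply', ih, phi_mul', ← pow_succ']

lemma phi_coe {K : Type*} [Field K] {N : ℕ} (B : Matrix (Fin N) (Fin N) ℤ)
    (P : Fin N → Kˣ) (i : Fin N) :
    ((phi B P i : Kˣ) : K) = ∏ j, ((P j : K)) ^ (B i j) := by
  simp only [phi]
  push_cast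
  rfl

/-! #### Additivity of local contributions -/

variable {K : Type*} [Field K] [NumberField K]

lemma finVal_def (v : HeightOneSpectrum (𝓞 K)) {a : K} (h : a ≠ 0) :
    finVal K v a =
      (Multiplicative.toAdd (WithZero.unzero ((v.valuation K).ne_zero_iff.mpr h)) : ℤ) *
        Real.log (Ideal.absNorm v.asIdeal) := by
  rw [finVal, dif_neg h]

lemma unzero_eq_iff {α : Type*} [Group α] {x : WithZero α} (h : x ≠ 0) {g : α} :
    WithZero.unzero h = g ↔ x = (g : WithZero α) := by
  rw [← WithZero.coe_inj, WithZero.coe_unzero]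

lemma finVal_mul (v : HeightOneSpectrum (𝓞 K)) {a b : K} (ha : a ≠ 0) (hb : b ≠ 0) :
    finVal K v (a * b) = finVal K v a + finVal K v b := by
  rw [finVal_def v (mul_ne_zero ha hb), finVal_def v ha, finVal_def v hb, ← add_mul]
  congr 1
  have : WithZero.unzero ((v.valuation K).ne_zero_iff.mpr (mul_ne_zero ha hb)) =
      WithZero.unzero ((v.valuation K).ne_zero_iff.mpr ha) *
      WithZero.unzero ((v.valuation K).ne_zero_iff.mpr hb) := by
    rw [unzero_eq_iff, WithZero.coe_mul, WithZero.coe_unzero, WithZero.coe_unzero, map_mul]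
  rw [this, toAdd_mul]
  push_cast
  ring

lemma finVal_zpow (v : HeightOneSpectrum (𝓞 K)) {a : K} (ha : a ≠ 0) (m : ℤ) :
    finVal K v (a ^ m) = m * finVal K v a := by
  rw [finVal_def v (zpow_ne_zero m ha), finVal_def v ha]
  have : WithZero.unzero ((v.valuation K).ne_zero_iff.mpr (zpow_ne_zero m ha)) =
      (WithZero.unzero ((v.valuation K).ne_zero_iff.mpr ha)) ^ m := by
    rw [unzero_eq_iff, WithZero.coe_zpow, WithZero.coe_unzero, map_zpow₀]
  rw [this, toAdd_zpow, smul_eq_mul]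
  push_cast
  ring

lemma finVal_prod {ι : Type*} (v : HeightOneSpectrum (𝓞 K)) (s : Finset ι) (f : ι → K)
    (hf : ∀ j ∈ s, f j ≠ 0) :
    finVal K v (∏ j ∈ s, f j) = ∑ j ∈ s, finVal K v (f j) := by
  induction s using Finset.cons_induction with
  | empty =>
    rw [Finset.prod_empty, Finset.sum_empty, finVal_def v one_ne_zero]
    have : WithZero.unzero ((v.valuation K).ne_zero_iff.mpr (one_ne_zero (α := K))) = 1 := by
      rw [unzero_eq_iff, WithZero.coe_one, map_one]
    rw [this]
    simp
  | cons a s ha ih =>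
    rw [Finset.prod_cons, Finset.sum_cons,
      finVal_mul v (hf a (Finset.mem_cons_self a s))
        (Finset.prod_ne_zero_iff.mpr fun j hj => hf j (Finset.mem_cons_of_mem hj)),
      ih fun j hj => hf j (Finset.mem_cons_of_mem hj)]

lemma finVal_prod_zpow (v : HeightOneSpectrum (𝓞 K)) {N : ℕ} (P : Fin N → Kˣ)
    (B : Matrix (Fin N) (Fin N) ℤ) (i : Fin N) :
    finVal K v (∏ j, ((P j : K)) ^ (B i j)) = ∑ j, (B i j : ℝ) * finVal K v (P j : K) := by
  rw [finVal_prod v _ _ fun j _ => zpow_ne_zero _ (P j).ne_zero]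
  exact Finset.sum_congr rfl fun j _ => finVal_zpow v (P j).ne_zero (B i j)

lemma log_place_prod_zpow (w : InfinitePlace K) {N : ℕ} (P : Fin N → Kˣ)
    (B : Matrix (Fin N) (Fin N) ℤ) (i : Fin N) :
    Real.log (w (∏ j, ((P j : K)) ^ (B i j)))
      = ∑ j, (B i j : ℝ) * Real.log (w (P j : K)) := by
  rw [map_prod]
  rw [Real.log_prod fun j _ => by
    simp only [map_zpow₀]
    exact zpow_ne_zero _ ((map_ne_zero w).mpr (P j).ne_zero)]
  refine Finset.sum_congr rfl fun j _ => ?_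
  rw [map_zpow₀, Real.log_zpow]

/-! #### Finiteness of the set of relevant finite places -/

lemma key_int (r : 𝓞 K) (hr : r ≠ 0) :
    {v : HeightOneSpectrum (𝓞 K) | v.valuation K (algebraMap (𝓞 K) K r) ≠ 1}.Finite := by
  have hsub : {v : HeightOneSpectrum (𝓞 K) | v.valuation K (algebraMap (𝓞 K) K r) ≠ 1} ⊆
      {v | v.asIdeal ∣ Ideal.span {r}} := by
    intro v hv
    rw [Set.mem_setOf_eq, HeightOneSpectrum.valuation_of_algebraMap] at hv
    have hlt : v.intValuation r < 1 := lt_of_le_of_ne (v.intValuation_le_one r) hv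
    rw [Set.mem_setOf_eq, ← HeightOneSpectrum.intValuation_lt_one_iff_dvd]
    exact hlt
  exact (Ideal.finite_factors (by simpa using hr)).subset hsub

lemma finite_val_ne_one {a : K} (ha : a ≠ 0) :
    {v : HeightOneSpectrum (𝓞 K) | v.valuation K a ≠ 1}.Finite := by
  obtain ⟨⟨n, ⟨d, hd⟩⟩, hk⟩ := IsLocalization.surj (nonZeroDivisors (𝓞 K)) a
  simp only at hk
  have hd0 : d ≠ 0 := nonZeroDivisors.ne_zero hd
  have hdK : (algebraMap (𝓞 K) K) d ≠ 0 := by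
    simpa using (map_ne_zero_iff _ (IsFractionRing.injective (𝓞 K) K)).mpr hd0
  have hn0 : n ≠ 0 := by
    intro h
    rw [h, map_zero] at hk
    exact (mul_ne_zero ha hdK) hk
  have hsub : {v : HeightOneSpectrum (𝓞 K) | v.valuation K a ≠ 1} ⊆
      {v | v.valuation K (algebraMap (𝓞 K) K n) ≠ 1} ∪
      {v | v.valuation K (algebraMap (𝓞 K) K d) ≠ 1} := by
    intro v hv
    by_contra h
    simp only [Set.mem_union, Set.mem_setOf_eq, not_or, not_not] at h
    apply hv
    have := congrArg (v.valuation K) hk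
    rw [map_mul, h.1, h.2, mul_one] at this
    exact this
  exact ((key_int n hn0).union (key_int d hd0)).subset hsub

lemma finVal_ne_zero_val_ne_one (v : HeightOneSpectrum (𝓞 K)) {a : K}
    (ha : a ≠ 0) (h : finVal K v a ≠ 0) : v.valuation K a ≠ 1 := by
  intro h1
  apply h
  rw [finVal_def v ha]
  have : WithZero.unzero ((v.valuation K).ne_zero_iff.mpr ha) = 1 := by
    rw [unzero_eq_iff, WithZero.coe_one]
    exact h1
  rw [this]
  simp

lemma finite_finVal_support {N : ℕ} (P : Fin N → Kˣ) :
    {v : HeightOneSpectrum (𝓞 K) | ∃ j, finVal K v (P j : K) ≠ 0}.Finite := by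
  have : {v : HeightOneSpectrum (𝓞 K) | ∃ j, finVal K v (P j : K) ≠ 0} ⊆
      ⋃ j, {v : HeightOneSpectrum (𝓞 K) | v.valuation K ((P j : K)) ≠ 1} := by
    rintro v ⟨j, hj⟩
    exact Set.mem_iUnion.mpr ⟨j, finVal_ne_zero_val_ne_one v (P j).ne_zero hj⟩
  exact (Set.finite_iUnion fun j => finite_val_ne_one (P j).ne_zero).subset this

/-! #### Binomial asymptotics -/

lemma matrix_pow_apply {N : ℕ} (lam : ℤ) (Nc A : Matrix (Fin N) (Fin N) ℤ)
    (hA : A = lam • (1 : Matrix (Fin N) (Fin N) ℤ) + Nc) (n : ℕ) (i j : Fin N) :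
    (A ^ n) i j = ∑ k ∈ range (n+1), lam^(n-k) * (n.choose k : ℤ) * ((Nc^k) i j) := by
  have hcom : Commute Nc (lam • (1 : Matrix (Fin N) (Fin N) ℤ)) :=
    (Commute.one_right Nc).smul_right lam
  have hA' : A = Nc + lam • 1 := by rw [hA, add_comm]
  rw [hA', hcom.add_pow]
  rw [Matrix.sum_apply]
  refine Finset.sum_congr rfl fun k _ => ?_
  rw [smul_pow, one_pow, mul_smul_comm, mul_one, ← Matrix.diagonal_natCast,
    Matrix.mul_diagonal, Matrix.smul_apply, smul_eq_mul]
  ring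

lemma choose_cast_eq {n k : ℕ} (hkn : k ≤ n) :
    ((n.choose k : ℕ) : ℝ) * (k.factorial : ℝ) = ∏ i ∈ range k, ((n:ℝ) - (i:ℝ)) := by
  have h := Nat.descFactorial_eq_factorial_mul_choose n k
  have h2 := Nat.descFactorial_eq_prod_range n k
  have key : ((k.factorial * n.choose k : ℕ) : ℝ) = ((∏ i ∈ range k, (n - i) : ℕ) : ℝ) := by
    rw [← h, h2]
  push_cast at key
  rw [mul_comm]
  convert key using 2 with i hi
  rw [Nat.cast_sub (le_of_lt (lt_of_lt_of_le (mem_range.mp hi) hkn))]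

lemma choose_div_pow_tendsto {k ℓ : ℕ} (hk : k ≤ ℓ) :
    Filter.Tendsto (fun n : ℕ => (n.choose k : ℝ) / (n:ℝ)^ℓ) atTop
      (nhds (if k = ℓ then ((ℓ.factorial : ℝ))⁻¹ else 0)) := by
  have heq : ∀ᶠ n : ℕ in atTop, (n.choose k : ℝ) / (n:ℝ)^ℓ =
      (∏ i ∈ range k, ((n:ℝ) - i)/(n:ℝ)) * ((k.factorial : ℝ) * (n:ℝ)^(ℓ-k))⁻¹ := by
    filter_upwards [eventually_ge_atTop (max k 1)] with n hn
    have hkn : k ≤ n := le_trans (le_max_left _ _) hn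
    have hn0 : (n:ℝ) ≠ 0 := by
      have : 1 ≤ n := le_trans (le_max_right _ _) hn
      positivity
    have hkey := choose_cast_eq (n := n) (k := k) hkn
    rw [Finset.prod_div_distrib, Finset.prod_const, card_range, ← hkey]
    have hfac : (k.factorial : ℝ) ≠ 0 := by positivity
    have hpow : (n:ℝ)^k * (n:ℝ)^(ℓ-k) = (n:ℝ)^ℓ := by
      rw [← pow_add]
      congr 1
      omega
    rw [← hpow]
    field_simp
  have hprod : Filter.Tendsto (fun n : ℕ => ∏ i ∈ range k, ((n:ℝ) - i)/(n:ℝ)) atTop (nhds 1) := by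
    have h1 : Filter.Tendsto (fun n : ℕ => ∏ i ∈ range k, (1 - (i:ℝ)/(n:ℝ))) atTop (nhds 1) := by
      have h2 := tendsto_finset_prod (ι := ℕ) (α := ℕ) (M := ℝ)
        (f := fun (i : ℕ) (n : ℕ) => 1 - (i:ℝ)/(n:ℝ)) (a := fun _ => (1:ℝ)) (range k)
        (fun i _ => by
          simpa using (tendsto_const_nhds).sub (tendsto_const_div_atTop_nhds_zero_nat (i:ℝ)))
      simpa using h2
    apply h1.congr'
    filter_upwards [eventually_ge_atTop 1] with n hn
    refine Finset.prod_congr rfl fun i _ => ?_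
    have hn0 : (n:ℝ) ≠ 0 := by positivity
    field_simp
  have hsec : Filter.Tendsto (fun n : ℕ => ((k.factorial : ℝ) * (n:ℝ)^(ℓ-k))⁻¹) atTop
      (nhds (if k = ℓ then ((ℓ.factorial : ℝ))⁻¹ else 0)) := by
    by_cases hkl : k = ℓ
    · subst hkl
      simp only [Nat.sub_self, pow_zero, mul_one, if_pos rfl]
      exact tendsto_const_nhds
    · rw [if_neg hkl]
      have hm : ℓ - k ≠ 0 := by omega
      have hat : Filter.Tendsto (fun n : ℕ => (k.factorial : ℝ) * (n:ℝ)^(ℓ-k)) atTop atTop := by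
        apply Filter.Tendsto.const_mul_atTop (by positivity : (0:ℝ) < k.factorial)
        exact (tendsto_pow_atTop hm).comp tendsto_natCast_atTop_atTop
      exact hat.inv_tendsto_atTop
  have hmul := hprod.mul hsec
  rw [one_mul] at hmul
  exact hmul.congr' (heq.mono fun n hn => hn.symm)

lemma entry_tendsto {N : ℕ} (lam : ℤ) (hlam : 1 < lam)
    (Nc A : Matrix (Fin N) (Fin N) ℤ) (ℓ : ℕ)
    (hnil : Nc ^ (ℓ + 1) = 0)
    (hA : A = lam • (1 : Matrix (Fin N) (Fin N) ℤ) + Nc) (i j : Fin N) :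
    Filter.Tendsto (fun n : ℕ => (((A^n) i j : ℤ) : ℝ) / ((n:ℝ)^ℓ * (lam:ℝ)^n)) atTop
      (nhds ((((Nc^ℓ) i j : ℤ) : ℝ) / ((ℓ.factorial : ℝ) * (lam:ℝ)^ℓ))) := by
  have hlamR : (1:ℝ) < (lam:ℝ) := by exact_mod_cast hlam
  have hlam0 : (lam:ℝ) ≠ 0 := by positivity
  have hvanish : ∀ k, ℓ + 1 ≤ k → Nc ^ k = 0 := fun k hk => by
    calc Nc ^ k = Nc ^ (ℓ+1) * Nc ^ (k - (ℓ+1)) := by rw [← pow_add]; congr 1; omega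
    _ = 0 := by rw [hnil, zero_mul]
  have hentry : ∀ n : ℕ, ℓ ≤ n → (((A^n) i j : ℤ) : ℝ)
      = ∑ k ∈ range (ℓ+1), (lam:ℝ)^(n-k) * (n.choose k : ℝ) * (((Nc^k) i j : ℤ) : ℝ) := by
    intro n hn
    rw [matrix_pow_apply lam Nc A hA n i j]
    rw [← Finset.sum_subset (Finset.range_subset_range.mpr (by omega : ℓ + 1 ≤ n + 1))
      (fun k _ hk => by
        rw [hvanish k (by simp [mem_range] at hk ⊢; omega), Matrix.zero_apply, mul_zero])]
    push_cast
    rfl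
  have heq : ∀ᶠ n : ℕ in atTop, (((A^n) i j : ℤ) : ℝ) / ((n:ℝ)^ℓ * (lam:ℝ)^n)
      = ∑ k ∈ range (ℓ+1), ((n.choose k : ℝ) / (n:ℝ)^ℓ) * ((lam:ℝ)^k)⁻¹
          * (((Nc^k) i j : ℤ) : ℝ) := by
    filter_upwards [eventually_ge_atTop ℓ, eventually_ge_atTop 1] with n hn hn1
    rw [hentry n hn, Finset.sum_div]
    refine Finset.sum_congr rfl fun k hk => ?_
    have hkn : k ≤ n := le_trans (by simp [mem_range] at hk; omega) hn
    have hpow : (lam:ℝ)^(n-k) * (lam:ℝ)^k = (lam:ℝ)^n := by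
      rw [← pow_add]; congr 1; omega
    have hn0 : (n:ℝ) ≠ 0 := by positivity
    field_simp
    rw [← hpow]
    ring
  have hlim := tendsto_finset_sum (range (ℓ+1))
    (f := fun (k : ℕ) (n : ℕ) => ((n.choose k : ℝ) / (n:ℝ)^ℓ) * ((lam:ℝ)^k)⁻¹
      * (((Nc^k) i j : ℤ) : ℝ))
    (a := fun k => (if k = ℓ then ((ℓ.factorial : ℝ))⁻¹ else 0) * ((lam:ℝ)^k)⁻¹
      * (((Nc^k) i j : ℤ) : ℝ))
    (fun k hk =>
      ((choose_div_pow_tendsto (by simp [mem_range] at hk; omega)).mul_const _).mul_const _)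
  have hsum : ∑ k ∈ range (ℓ+1),
      (if k = ℓ then ((ℓ.factorial : ℝ))⁻¹ else 0) * ((lam:ℝ)^k)⁻¹ * (((Nc^k) i j : ℤ) : ℝ)
      = (((Nc^ℓ) i j : ℤ) : ℝ) / ((ℓ.factorial : ℝ) * (lam:ℝ)^ℓ) := by
    rw [Finset.sum_eq_single ℓ]
    · rw [if_pos rfl]
      field_simp
    · intro k _ hne
      rw [if_neg hne, zero_mul, zero_mul]
    · intro h
      exact absurd (self_mem_range_succ ℓ) h
  rw [hsum] at hlim
  exact hlim.congr' (heq.mono fun n hn => hn.symm)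

end Aux

/-! ### The height as a function of a real exponent matrix -/

section G

open Finset

variable {K : Type*} [Field K] [NumberField K] {N : ℕ}

/-- The Weil height of `φ_B(P)` as a function of a real matrix `B`. -/
def Gfun (P : Fin N → Kˣ) (B : Fin N → Fin N → ℝ) : ℝ :=
  (Module.finrank ℚ K : ℝ)⁻¹ *
    ((∑ w : InfinitePlace K, (w.mult : ℝ) *
        ⨆ i, max 0 (∑ j, B i j * Real.log (w (P j : K)))) +
     ∑ᶠ v : HeightOneSpectrum (𝓞 K), ⨆ i, max 0 (∑ j, B i j * finVal K v (P j : K)))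

lemma uHeight_phi_eq (P : Fin N → Kˣ) (B : Matrix (Fin N) (Fin N) ℤ) :
    uHeight K (phi B P) = Gfun P (fun i j => (B i j : ℝ)) := by
  unfold uHeight logHeight Gfun
  simp only [phi_coe, log_place_prod_zpow, finVal_prod_zpow]

lemma Gfun_support_subset (P : Fin N → Kˣ) (B : Fin N → Fin N → ℝ) :
    Function.support (fun v : HeightOneSpectrum (𝓞 K) =>
        ⨆ i, max 0 (∑ j, B i j * finVal K v (P j : K)))
      ⊆ {v : HeightOneSpectrum (𝓞 K) | ∃ j, finVal K v (P j : K) ≠ 0} := by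
  intro v hv
  by_contra h
  simp only [Set.mem_setOf_eq, not_exists, not_not] at h
  apply hv
  have hz : ∀ i, max 0 (∑ j, B i j * finVal K v (P j : K)) = (0:ℝ) := fun i => by
    have : ∀ j, B i j * finVal K v (P j : K) = 0 := fun j => by rw [h j, mul_zero]
    rw [Finset.sum_congr rfl fun j _ => this j]
    simp
  show (⨆ i, max 0 (∑ j, B i j * finVal K v (P j : K))) = 0
  cases isEmpty_or_nonempty (Fin N) with
  | inl hemp => exact Real.iSup_of_isEmpty _
  | inr hne =>
    simp_rw [hz]
    exact ciSup_const

lemma Gfun_smul (P : Fin N → Kˣ) (c : ℝ) (hc : 0 ≤ c) (B : Fin N → Fin N → ℝ) :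
    Gfun P (fun i j => c * B i j) = c * Gfun P B := by
  unfold Gfun
  have hmax : ∀ x : ℝ, max 0 (c * x) = c * max 0 x := fun x => by
    rw [mul_max_of_nonneg _ _ hc, mul_zero]
  have hsup : ∀ f : Fin N → ℝ, (⨆ i, max 0 (c * f i)) = c * ⨆ i, max 0 (f i) := fun f => by
    rw [Real.mul_iSup_of_nonneg hc]
    exact iSup_congr fun i => (hmax (f i)).symm |>.symm
  have hsum : ∀ (L : Fin N → ℝ) (i : Fin N),
      (∑ j, (c * B i j) * L j) = c * ∑ j, B i j * L j := fun L i => by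
    rw [Finset.mul_sum]
    exact Finset.sum_congr rfl fun j _ => by ring
  have h1 : ∀ w : InfinitePlace K,
      (⨆ i, max 0 (∑ j, (c * B i j) * Real.log (w (P j : K))))
        = c * ⨆ i, max 0 (∑ j, B i j * Real.log (w (P j : K))) := fun w => by
    simp_rw [hsum (fun j => Real.log (w (P j : K)))]
    exact hsup _
  have h2 : ∀ v : HeightOneSpectrum (𝓞 K),
      (⨆ i, max 0 (∑ j, (c * B i j) * finVal K v (P j : K)))
        = c * ⨆ i, max 0 (∑ j, B i j * finVal K v (P j : K)) := fun v => by
    simp_rw [hsum (fun j => finVal K v (P j : K))]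
    exact hsup _
  simp_rw [h1, h2]
  rw [← mul_finsum _ c]
  rw [show (∑ w : InfinitePlace K, (w.mult : ℝ) *
      (c * ⨆ i, max 0 (∑ j, B i j * Real.log (w (P j : K)))))
      = c * ∑ w : InfinitePlace K, (w.mult : ℝ) *
      (⨆ i, max 0 (∑ j, B i j * Real.log (w (P j : K)))) by
    rw [Finset.mul_sum]
    exact Finset.sum_congr rfl fun w _ => by ring]
  ring

lemma Gfun_tendsto (P : Fin N → Kˣ) (Bseq : ℕ → Fin N → Fin N → ℝ)
    (B' : Fin N → Fin N → ℝ)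
    (h : ∀ i j, Filter.Tendsto (fun n => Bseq n i j) atTop (nhds (B' i j))) :
    Filter.Tendsto (fun n => Gfun P (Bseq n)) atTop (nhds (Gfun P B')) := by
  cases isEmpty_or_nonempty (Fin N) with
  | inl hemp =>
    have hconst : ∀ B : Fin N → Fin N → ℝ, Gfun P B = Gfun P B' := fun B => by
      unfold Gfun
      congr 2
      · exact Finset.sum_congr rfl fun w _ => by
          congr 1
          exact iSup_congr fun i => isEmptyElim i
      · exact finsum_congr fun v => iSup_congr fun i => isEmptyElim i
    simp_rw [hconst]
    exact tendsto_const_nhds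
  | inr hne =>
    unfold Gfun
    apply Filter.Tendsto.const_mul
    apply Filter.Tendsto.add
    · apply tendsto_finset_sum
      intro w _
      apply Filter.Tendsto.const_mul
      have hrw : ∀ Bm : Fin N → Fin N → ℝ,
          (⨆ i, max 0 (∑ j, Bm i j * Real.log (w (P j : K))))
            = Finset.univ.sup' Finset.univ_nonempty
                (fun i => max 0 (∑ j, Bm i j * Real.log (w (P j : K)))) := fun Bm =>
        (Finset.sup'_univ_eq_ciSup _).symm
      simp_rw [hrw]
      exact Filter.Tendsto.finset_sup'_nhds_apply Finset.univ_nonempty fun i _ =>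
        tendsto_const_nhds.max (tendsto_finset_sum _ fun j _ => (h i j).mul_const _)
    · have hrw : ∀ Bm : Fin N → Fin N → ℝ,
          (∑ᶠ v : HeightOneSpectrum (𝓞 K), ⨆ i, max 0 (∑ j, Bm i j * finVal K v (P j : K)))
            = ∑ v ∈ (finite_finVal_support P).toFinset,
                ⨆ i, max 0 (∑ j, Bm i j * finVal K v (P j : K)) := fun Bm =>
        finsum_eq_sum_of_support_subset _ (by
          refine subset_trans (Gfun_support_subset P Bm) ?_
          simp)
      simp_rw [hrw]
      apply tendsto_finset_sum
      intro v _
      have hrw2 : ∀ Bm : Fin N → Fin N → ℝ,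
          (⨆ i, max 0 (∑ j, Bm i j * finVal K v (P j : K)))
            = Finset.univ.sup' Finset.univ_nonempty
                (fun i => max 0 (∑ j, Bm i j * finVal K v (P j : K))) := fun Bm =>
        (Finset.sup'_univ_eq_ciSup _).symm
      simp_rw [hrw2]
      exact Filter.Tendsto.finset_sup'_nhds_apply Finset.univ_nonempty fun i _ =>
        tendsto_const_nhds.max (tendsto_finset_sum _ fun j _ => (h i j).mul_const _)

end G

/-- For A = λI + 𝒩, λ > 1 an integer, 𝒩^{ℓ+1} = 0 ≠ 𝒩^ℓ (largest Jordan block size ℓ+1,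
A not diagonalizable), and π = φ_{𝒩^ℓ} = φ_{(A-λI)^ℓ}:
ĥ_A⁺(P) = limsup h(φ_A^n(P))/(n^ℓ·λⁿ) = h(π(P))/(ℓ!·λ^ℓ). -/
theorem statement16 {N : ℕ} (lam : ℤ) (hlam : 1 < lam)
    (Nc : Matrix (Fin N) (Fin N) ℤ) (ℓ : ℕ) (hℓ : 1 ≤ ℓ)
    (hnil : Nc ^ (ℓ + 1) = 0) (hne : Nc ^ ℓ ≠ 0)
    (A : Matrix (Fin N) (Fin N) ℤ)
    (hA : A = lam • (1 : Matrix (Fin N) (Fin N) ℤ) + Nc)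
    (K : Type*) [Field K] [NumberField K] (P : Fin N → Kˣ) :
    Filter.limsup
      (fun n : ℕ => uHeight K ((phi A)^[n] P) / ((n : ℝ) ^ ℓ * (lam : ℝ) ^ n))
      Filter.atTop
    = uHeight K (phi (Nc ^ ℓ) P) / ((ℓ.factorial : ℝ) * (lam : ℝ) ^ ℓ) := by
  have hlamR : (0:ℝ) < (lam:ℝ) := by
    have : (1:ℝ) < (lam:ℝ) := by exact_mod_cast hlam
    linarith
  have hkey : ∀ n : ℕ, uHeight K ((phi A)^[n] P) / ((n:ℝ)^ℓ * (lam:ℝ)^n)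
      = Gfun P (fun i j => ((((A^n) i j : ℤ)):ℝ) / ((n:ℝ)^ℓ * (lam:ℝ)^n)) := by
    intro n
    rw [phi_iterate, uHeight_phi_eq P (A^n)]
    have hc : (0:ℝ) ≤ (((n:ℝ)^ℓ * (lam:ℝ)^n))⁻¹ := by positivity
    rw [div_eq_inv_mul, ← Gfun_smul P _ hc]
    congr 1
    funext i j
    rw [div_eq_inv_mul]
  have hRHS : uHeight K (phi (Nc ^ ℓ) P) / ((ℓ.factorial : ℝ) * (lam:ℝ)^ℓ)
      = Gfun P (fun i j => ((((Nc^ℓ) i j : ℤ)):ℝ) / ((ℓ.factorial : ℝ) * (lam:ℝ)^ℓ)) := by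
    rw [uHeight_phi_eq P (Nc^ℓ)]
    have hc : (0:ℝ) ≤ ((ℓ.factorial : ℝ) * (lam:ℝ)^ℓ)⁻¹ := by positivity
    rw [div_eq_inv_mul, ← Gfun_smul P _ hc]
    congr 1
    funext i j
    rw [div_eq_inv_mul]
  have htend := Gfun_tendsto P
    (fun n => fun i j => ((((A^n) i j : ℤ)):ℝ) / ((n:ℝ)^ℓ * (lam:ℝ)^n))
    (fun i j => ((((Nc^ℓ) i j : ℤ)):ℝ) / ((ℓ.factorial : ℝ) * (lam:ℝ)^ℓ))
    (fun i j => entry_tendsto lam hlam Nc A ℓ hnil hA i j)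
  rw [hRHS]
  exact (htend.congr (fun n => (hkey n).symm)).limsup_eq
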